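/- The reduced shuffle diagonal Δ̄ : T̄(V) → T̄(V)⊗T̄(V) is a derivation of the Lie algebra associated to T̄(V) (with the commutator bracket of concatenation), with values in the Lie module T̄(V)⊗T̄(V) given by x·ξ := Δ(x)·ξ − ξ·(1⊗x + x⊗1). In particular, Δ̄([x,y]) = x*Δ̄(y) + Δ̄(x)*y − y*Δ̄(x) − Δ̄(y)*x for all x,y ∈ T̄(V). -/

import Mathlib

open scoped TensorProduct

/-- The shuffle diagonal on the tensor algebra: the unique algebra homomorphism
`T(V) → T(V) ⊗ T(V)` (concatenation products) sending `v ↦ v⊗1 + 1⊗v`. -/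
noncomputable def shuffleDiag (k V : Type) [Field k] [AddCommGroup V] [Module k V] :
    TensorAlgebra k V →ₐ[k] TensorAlgebra k V ⊗[k] TensorAlgebra k V :=
  TensorAlgebra.lift k
    (((Algebra.TensorProduct.includeLeft :
        TensorAlgebra k V →ₐ[k] TensorAlgebra k V ⊗[k] TensorAlgebra k V).toLinearMap
      + (Algebra.TensorProduct.includeRight :
        TensorAlgebra k V →ₐ[k] TensorAlgebra k V ⊗[k] TensorAlgebra k V).toLinearMap).comp
      (TensorAlgebra.ι k))

/-- The reduced shuffle diagonal `Δ̄(x) = Δ(x) − 1⊗x − x⊗1`. -/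
noncomputable def redDiag (k V : Type) [Field k] [AddCommGroup V] [Module k V]
    (x : TensorAlgebra k V) : TensorAlgebra k V ⊗[k] TensorAlgebra k V :=
  shuffleDiag k V x - 1 ⊗ₜ[k] x - x ⊗ₜ[k] 1

/-- The augmentation ideal `T̄(V)` of the tensor algebra, as a `k`-submodule. -/
noncomputable def augSub (k V : Type) [Field k] [AddCommGroup V] [Module k V] :
    Submodule k (TensorAlgebra k V) :=
  LinearMap.ker (TensorAlgebra.algebraMapInv : TensorAlgebra k V →ₐ[k] k).toLinearMap

/-- The subspace `T̄(V) ⊗ T̄(V)` inside `T(V) ⊗ T(V)`. -/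
noncomputable def augSub2 (k V : Type) [Field k] [AddCommGroup V] [Module k V] :
    Submodule k (TensorAlgebra k V ⊗[k] TensorAlgebra k V) :=
  LinearMap.range (TensorProduct.map (augSub k V).subtype (augSub k V).subtype)

/-- The reduced shuffle diagonal `Δ̄` is a derivation of the Lie algebra associated
to `T̄(V)` (commutator of concatenation) with values in `T̄(V)⊗T̄(V)`:
`Δ̄([x,y]) = x*Δ̄(y) + Δ̄(x)*y − y*Δ̄(x) − Δ̄(y)*x`. -/
theorem redDiag_lie_derivation {k V : Type} [Field k] [CharZero k]
    [AddCommGroup V] [Module k V]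
    (x y : TensorAlgebra k V) (hx : x ∈ augSub k V) (hy : y ∈ augSub k V) :
    redDiag k V (x * y - y * x)
      = shuffleDiag k V x * redDiag k V y
        + redDiag k V x * (1 ⊗ₜ[k] y + y ⊗ₜ[k] 1)
        - shuffleDiag k V y * redDiag k V x
        - redDiag k V y * (1 ⊗ₜ[k] x + x ⊗ₜ[k] 1) := by
  simp only [redDiag, map_sub, map_mul]
  have h : ∀ a b : TensorAlgebra k V,
      ((1 : TensorAlgebra k V) ⊗ₜ[k] a + a ⊗ₜ[k] (1 : TensorAlgebra k V)) *
        (1 ⊗ₜ[k] b + b ⊗ₜ[k] 1)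
      = 1 ⊗ₜ[k] (a * b) + b ⊗ₜ[k] a + a ⊗ₜ[k] b + (a * b) ⊗ₜ[k] 1 := by
    intro a b
    simp [mul_add, add_mul, Algebra.TensorProduct.tmul_mul_tmul]
    abel
  have e1 := h x y
  have e2 := h y x
  have exy : (1 : TensorAlgebra k V) ⊗ₜ[k] (x * y - y * x)
      = 1 ⊗ₜ[k] (x * y) - 1 ⊗ₜ[k] (y * x) := TensorProduct.tmul_sub _ _ _
  have eyx : (x * y - y * x) ⊗ₜ[k] (1 : TensorAlgebra k V)
      = (x * y) ⊗ₜ[k] 1 - (y * x) ⊗ₜ[k] 1 := TensorProduct.sub_tmul _ _ _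
  rw [exy, eyx]
  have key : shuffleDiag k V x * (shuffleDiag k V y - 1 ⊗ₜ[k] y - y ⊗ₜ[k] 1)
        + (shuffleDiag k V x - 1 ⊗ₜ[k] x - x ⊗ₜ[k] 1) * (1 ⊗ₜ[k] y + y ⊗ₜ[k] 1)
        - shuffleDiag k V y * (shuffleDiag k V x - 1 ⊗ₜ[k] x - x ⊗ₜ[k] 1)
        - (shuffleDiag k V y - 1 ⊗ₜ[k] y - y ⊗ₜ[k] 1) * (1 ⊗ₜ[k] x + x ⊗ₜ[k] 1)
      = shuffleDiag k V x * shuffleDiag k V y - shuffleDiag k V y * shuffleDiag k V x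
        - ((1 ⊗ₜ[k] x + x ⊗ₜ[k] 1) * (1 ⊗ₜ[k] y + y ⊗ₜ[k] 1))
        + ((1 ⊗ₜ[k] y + y ⊗ₜ[k] 1) * (1 ⊗ₜ[k] x + x ⊗ₜ[k] 1)) := by
    simp only [mul_sub, sub_mul, mul_add, add_mul]
    abel
  rw [key, e1, e2]
  abel
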